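/- For every x ≥ 0, P_x-almost surely on the event {ζ < ∞}, the resurrected process reaches 0 continuously: Z_{ζ−} = 0, i.e., lim_{t↑ζ} Z_t = 0. In particular, either Z reaches 0 continuously at a finite time or it never reaches 0. -/

import Mathlib

noncomputable section
open MeasureTheory ProbabilityTheory Set Filter
open scoped ENNReal NNReal Classical

/-- The first passage time of a path into `(-∞,0]`, as an extended nonnegative real. -/
def tauP (f : ℝ → ℝ) : ℝ≥0∞ :=
  if ∃ t : ℝ, 0 ≤ t ∧ f t ≤ 0 then ENNReal.ofReal (sInf {t : ℝ | 0 ≤ t ∧ f t ≤ 0}) else ∞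

/-- The left limit `f(T-)` of a path at a time `T`, with the convention `f(0-) = f 0`. -/
def preVal (f : ℝ → ℝ) (T : ℝ≥0∞) : ℝ :=
  if T = 0 then f 0 else Function.leftLim f T.toReal

/-- The sequence of paths `X^{(n+1)}`, `n ≥ 0`, obtained from the path `f = X^{(1)}` by
successively removing the first jump through `0`. -/
def resSeq (f : ℝ → ℝ) : ℕ → ℝ → ℝ
  | 0 => f
  | n + 1 =>
      let g := resSeq f n
      if tauP g = ∞ then g
      else fun t =>
        if ENNReal.ofReal t < tauP g then g t
        else g t - (g (tauP g).toReal - preVal g (tauP g))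

/-- `tauSeq f n` is the resurrection time `τ_{n+1}`, the first passage time of `X^{(n+1)}`
into `(-∞,0]`. -/
def tauSeq (f : ℝ → ℝ) (n : ℕ) : ℝ≥0∞ := tauP (resSeq f n)

/-- The resurrection times `τ_n`, `n ≥ 0`, with `τ_0 = 0`. -/
def tauN (f : ℝ → ℝ) : ℕ → ℝ≥0∞
  | 0 => 0
  | n + 1 => tauSeq f n

/-- The resurrected path `Z` built from the path `f`: `Z_t = lim_n X^{(n)}_t 1_{t < τ_n}`. -/
def resProc (f : ℝ → ℝ) (t : ℝ) : ℝ :=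
  if h : ∃ n, ENNReal.ofReal t < tauSeq f n then resSeq f (Nat.find h) t else 0

/-- The absorption time `ζ = lim_n τ_n` of the resurrected path. -/
def zetaP (f : ℝ → ℝ) : ℝ≥0∞ := ⨆ n, tauSeq f n

/-- The exponential function on `ℝ≥0∞`. -/
def eexp (a : ℝ≥0∞) : ℝ≥0∞ := ∑' n : ℕ, a ^ n / (Nat.factorial n : ℝ≥0∞)

/-- The number of jumps of a path during the time interval `(0,1]` whose sizes lie in `A`,
as an element of `ℝ≥0∞`. -/
def jumpCount (f : ℝ → ℝ) (A : Set ℝ) : ℝ≥0∞ :=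
  ∑' _ : {t : ℝ // t ∈ Set.Ioc (0:ℝ) 1 ∧ f t - Function.leftLim f t ∈ A}, (1 : ℝ≥0∞)

/-- `X` is a Lévy process under `P`: it starts from `0`, has càdlàg paths and stationary
independent increments. -/
structure IsLevy {Ω : Type*} [MeasurableSpace Ω] (P : Measure Ω) (X : ℝ → Ω → ℝ) : Prop where
  measurable : ∀ t, Measurable (X t)
  init : ∀ ω, X 0 ω = 0
  cadlag_right : ∀ ω, ∀ t ≥ (0:ℝ), ContinuousWithinAt (fun s => X s ω) (Set.Ici t) t
  cadlag_left : ∀ ω, ∀ t > (0:ℝ),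
    Tendsto (fun s => X s ω) (nhdsWithin t (Set.Iio t)) (nhds (Function.leftLim (fun s => X s ω) t))
  indep_incr : ∀ (n : ℕ) (t : ℕ → ℝ), Monotone t → 0 ≤ t 0 →
    iIndepFun
      (fun (i : Fin n) ω => X (t (i + 1 : ℕ)) ω - X (t i) ω) P
  stat_incr : ∀ s t : ℝ, 0 ≤ s → 0 ≤ t →
    Measure.map (fun ω => X (s + t) ω - X s ω) P = Measure.map (X t) P

/-- `π` is the Lévy measure of the process `X` under `P` : on sets bounded away from `0`, it
gives the expected number of jumps of `X` during `(0,1]` with sizes in the set. -/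
def IsLevyMeasure {Ω : Type*} [MeasurableSpace Ω] (P : Measure Ω) (X : ℝ → Ω → ℝ)
    (π : Measure ℝ) : Prop :=
  π {0} = 0 ∧ ∀ A : Set ℝ, MeasurableSet A → (∃ ε > 0, A ⊆ {y : ℝ | ε ≤ |y|}) →
    π A = ∫⁻ ω, jumpCount (fun t => X t ω) A ∂P

/-- The negative tail `π̄⁻(y) = π((-∞,y])` of a Lévy measure. -/
def negTail (π : Measure ℝ) (y : ℝ) : ℝ≥0∞ := π (Set.Iic y)

/-- The path of the process started from `x`, i.e. the process `X` under `P_x`. -/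
def pathFrom {Ω : Type*} (X : ℝ → Ω → ℝ) (x : ℝ) (ω : Ω) : ℝ → ℝ := fun t => x + X t ω


namespace Res14
open Function Topology

/-- auxiliary: `ofReal t < τ ↔ t < τ.toReal` when `0 < τ` and `τ ≠ ∞`. -/
lemma ofReal_lt_iff {τ : ℝ≥0∞} (h0 : 0 < τ) (ht : τ ≠ ∞) (t : ℝ) :
    ENNReal.ofReal t < τ ↔ t < τ.toReal := by
  rcases le_or_gt 0 t with h | h
  · exact ENNReal.ofReal_lt_iff_lt_toReal h ht
  · constructor
    · intro _; exact h.trans_le (ENNReal.toReal_nonneg)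
    · intro _; rw [ENNReal.ofReal_of_nonpos h.le]; exact h0

lemma ofReal_lt_of_lt_toReal {τ : ℝ≥0∞} (h0 : 0 < τ) {t : ℝ} (h : t < τ.toReal) :
    ENNReal.ofReal t < τ := by
  rcases eq_or_ne τ ∞ with rfl | hne
  · exact ENNReal.ofReal_lt_top
  · exact (ofReal_lt_iff h0 hne t).2 h

lemma toReal_le_of_not_lt {τ : ℝ≥0∞} {u : ℝ} (hu : 0 ≤ u) (h : ¬ ENNReal.ofReal u < τ) :
    τ.toReal ≤ u := by
  have hne : τ ≠ ∞ := by
    intro e; rw [e] at h; exact h ENNReal.ofReal_lt_top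
  have : τ ≤ ENNReal.ofReal u := not_lt.1 h
  calc τ.toReal ≤ (ENNReal.ofReal u).toReal := ENNReal.toReal_mono ENNReal.ofReal_ne_top this
  _ = u := ENNReal.toReal_ofReal hu

lemma tauP_le_of_mem {g : ℝ → ℝ} {t : ℝ} (ht : 0 ≤ t) (hg : g t ≤ 0) :
    tauP g ≤ ENNReal.ofReal t := by
  rw [tauP, if_pos ⟨t, ht, hg⟩]
  exact ENNReal.ofReal_le_ofReal (csInf_le ⟨0, fun s hs => hs.1⟩ ⟨ht, hg⟩)

lemma pos_of_lt_tauP {g : ℝ → ℝ} {t : ℝ} (ht : 0 ≤ t) (h : ENNReal.ofReal t < tauP g) :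
    0 < g t := by
  by_contra hle
  exact absurd ((tauP_le_of_mem ht (not_lt.1 hle)).trans_lt h) (lt_irrefl _)

lemma sInf_nonneg' {g : ℝ → ℝ} : 0 ≤ sInf {t : ℝ | 0 ≤ t ∧ g t ≤ 0} := by
  rcases Set.eq_empty_or_nonempty {t : ℝ | 0 ≤ t ∧ g t ≤ 0} with h | h
  · simp [h, Real.sInf_empty]
  · exact le_csInf h fun s hs => hs.1

/-- attainment: if `g` is right-continuous and `tauP g < ∞` then `g` at `tauP g` is `≤ 0`. -/
lemma attain {g : ℝ → ℝ} (hrc : ∀ t ≥ (0:ℝ), ContinuousWithinAt g (Set.Ici t) t)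
    (hne : tauP g ≠ ∞) : g (tauP g).toReal ≤ 0 := by
  have hex : ∃ t : ℝ, 0 ≤ t ∧ g t ≤ 0 := by
    by_contra h; rw [tauP, if_neg h] at hne; exact hne rfl
  set S := {t : ℝ | 0 ≤ t ∧ g t ≤ 0} with hS
  have hSne : S.Nonempty := hex
  have h0 : 0 ≤ sInf S := sInf_nonneg'
  have htr : (tauP g).toReal = sInf S := by
    rw [tauP, if_pos hex, ENNReal.toReal_ofReal h0]
  rw [htr]
  by_contra hpos
  have hpos' : 0 < g (sInf S) := lt_of_not_ge hpos
  have hev : ∀ᶠ s in 𝓝[Set.Ici (sInf S)] (sInf S), 0 < g s :=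
    (hrc (sInf S) h0).eventually (eventually_gt_nhds hpos')
  rw [Filter.Eventually, Metric.mem_nhdsWithin_iff] at hev
  obtain ⟨ε, hε, hball⟩ := hev
  obtain ⟨s, hsS, hslt⟩ := Real.lt_sInf_add_pos hSne hε
  have hs0 : sInf S ≤ s := csInf_le ⟨0, fun u hu => hu.1⟩ hsS
  have : 0 < g s := hball ⟨by
    simp only [Metric.mem_ball, Real.dist_eq]
    rw [abs_of_nonneg (by linarith)]; linarith, hs0⟩
  exact absurd hsS.2 (not_le.2 this)

/-- one resurrection step. -/
def resStep (g : ℝ → ℝ) : ℝ → ℝ :=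
  if tauP g = ∞ then g
  else fun t =>
    if ENNReal.ofReal t < tauP g then g t
    else g t - (g (tauP g).toReal - preVal g (tauP g))

lemma resSeq_succ (f : ℝ → ℝ) (n : ℕ) : resSeq f (n + 1) = resStep (resSeq f n) := rfl

lemma resStep_agree {g : ℝ → ℝ} {t : ℝ} (h : ENNReal.ofReal t < tauP g) :
    resStep g t = g t := by
  rw [resStep]
  split_ifs with h1
  · rfl
  · simp only [if_pos h]

lemma resStep_shift {g : ℝ → ℝ} {t : ℝ} (hne : tauP g ≠ ∞) (h : ¬ ENNReal.ofReal t < tauP g) :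
    resStep g t = g t - (g (tauP g).toReal - preVal g (tauP g)) := by
  rw [resStep, if_neg hne]
  simp only [if_neg h]

lemma resStep_of_tauP_eq_zero {g : ℝ → ℝ} (h : tauP g = 0) : resStep g = g := by
  funext t
  have hne : tauP g ≠ ∞ := by rw [h]; exact ENNReal.zero_ne_top
  have hnlt : ¬ ENNReal.ofReal t < tauP g := by rw [h]; exact not_lt.2 zero_le
  rw [resStep_shift hne hnlt, h]
  simp [preVal]

lemma tauP_le_resStep (g : ℝ → ℝ) : tauP g ≤ tauP (resStep g) := by
  have key : ∀ s : ℝ, 0 ≤ s → resStep g s ≤ 0 → tauP g ≤ ENNReal.ofReal s := by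
    intro s hs hle
    by_contra hlt
    have hlt' : ENNReal.ofReal s < tauP g := not_le.1 hlt
    have := pos_of_lt_tauP hs hlt'
    rw [resStep_agree hlt'] at hle
    linarith
  by_contra hcon
  have hlt : tauP (resStep g) < tauP g := not_le.1 hcon
  have hne' : tauP (resStep g) ≠ ∞ := hlt.ne_top
  have hex' : ∃ t : ℝ, 0 ≤ t ∧ resStep g t ≤ 0 := by
    by_contra h
    rw [tauP, if_neg h] at hne'; exact hne' rfl
  set S' := {t : ℝ | 0 ≤ t ∧ resStep g t ≤ 0} with hS'
  have hSne' : S'.Nonempty := hex'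
  have hval : tauP (resStep g) = ENNReal.ofReal (sInf S') := by rw [tauP, if_pos hex']
  -- find an element of S' strictly below tauP g
  rcases eq_or_ne (tauP g) ∞ with htop | htop
  · obtain ⟨s, hsS⟩ := hSne'
    have := key s hsS.1 hsS.2
    rw [htop] at this
    exact ENNReal.ofReal_ne_top (le_antisymm (this.trans le_top) le_top ▸ (top_le_iff.1 this))
  · set r := (tauP g).toReal with hr
    have hrpos : 0 < r := by
      rw [hval] at hlt
      have h0' : (0:ℝ≥0∞) < tauP g := lt_of_le_of_lt zero_le hlt
      exact ENNReal.toReal_pos h0'.ne' htop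
    have hinf_lt : sInf S' < r := by
      rw [hval] at hlt
      have h0 : 0 ≤ sInf S' := le_csInf hSne' fun s hs => hs.1
      exact (ENNReal.ofReal_lt_iff_lt_toReal h0 htop).1 hlt
    obtain ⟨s, hsS, hslt⟩ := Real.lt_sInf_add_pos hSne' (sub_pos.2 hinf_lt)
    have hs_lt_r : s < r := by linarith
    have : tauP g ≤ ENNReal.ofReal s := key s hsS.1 hsS.2
    have : tauP g < tauP g := lt_of_le_of_lt this (by
      calc ENNReal.ofReal s < ENNReal.ofReal r := (ENNReal.ofReal_lt_ofReal_iff hrpos).2 hs_lt_r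
      _ = tauP g := ENNReal.ofReal_toReal htop)
    exact absurd this (lt_irrefl _)

lemma cadlag_resStep {g : ℝ → ℝ}
    (hrc : ∀ t ≥ (0:ℝ), ContinuousWithinAt g (Set.Ici t) t)
    (hll : ∀ t > (0:ℝ), Tendsto g (𝓝[<] t) (𝓝 (leftLim g t))) :
    (∀ t ≥ (0:ℝ), ContinuousWithinAt (resStep g) (Set.Ici t) t) ∧
    (∀ t > (0:ℝ), Tendsto (resStep g) (𝓝[<] t) (𝓝 (leftLim (resStep g) t))) := by
  rcases eq_or_ne (tauP g) ∞ with htop | htop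
  · have h : resStep g = g := by rw [resStep, if_pos htop]
    rw [h]; exact ⟨hrc, hll⟩
  rcases eq_or_ne (tauP g) 0 with h0 | h0
  · rw [resStep_of_tauP_eq_zero h0]; exact ⟨hrc, hll⟩
  have hτpos : 0 < tauP g := pos_iff_ne_zero.2 h0
  set c : ℝ := g (tauP g).toReal - preVal g (tauP g) with hc
  set w : ℝ := (tauP g).toReal with hw
  have hwpos : 0 < w := ENNReal.toReal_pos h0 htop
  have hshape : ∀ t : ℝ, resStep g t = if t < w then g t else g t - c := by
    intro t
    by_cases h : t < w
    · rw [if_pos h, resStep_agree (ofReal_lt_of_lt_toReal hτpos h)]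
    · rw [if_neg h, resStep_shift htop]
      rw [not_lt] at h ⊢
      exact le_of_eq_of_le (ENNReal.ofReal_toReal htop).symm (ENNReal.ofReal_le_ofReal h)
  constructor
  · intro s hs
    rcases lt_or_ge s w with hsw | hsw
    · have hev : ∀ᶠ t in 𝓝[Set.Ici s] s, resStep g t = g t := by
        filter_upwards [eventually_nhdsWithin_of_eventually_nhds
          (eventually_lt_nhds hsw)] with t ht
        rw [hshape t, if_pos ht]
      exact (hrc s hs).congr_of_eventuallyEq hev (by rw [hshape s, if_pos hsw])
    · have heq : ∀ t ∈ Set.Ici s, resStep g t = g t - c := by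
        intro t ht
        rw [hshape t, if_neg (not_lt.2 (hsw.trans ht))]
      exact (ContinuousWithinAt.sub (hrc s hs) continuousWithinAt_const).congr heq
        (heq s (le_refl s))
  · intro s hs
    rcases le_or_gt s w with hsw | hsw
    · have hev : ∀ᶠ t in 𝓝[<] s, resStep g t = g t := by
        filter_upwards [self_mem_nhdsWithin] with t ht
        rw [hshape t, if_pos (lt_of_lt_of_le ht hsw)]
      have htd : Tendsto (resStep g) (𝓝[<] s) (𝓝 (leftLim g s)) :=
        (hll s hs).congr' (EventuallyEq.symm hev)
      rwa [leftLim_eq_of_tendsto htd]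
    · have hev : ∀ᶠ t in 𝓝[<] s, resStep g t = g t - c := by
        filter_upwards [Ioo_mem_nhdsLT_of_mem ⟨hsw, le_refl s⟩] with t ht
        rw [hshape t, if_neg (not_lt.2 ht.1.le)]
      have htd : Tendsto (resStep g) (𝓝[<] s) (𝓝 (leftLim g s - c)) :=
        (Tendsto.sub (hll s hs) tendsto_const_nhds).congr' (EventuallyEq.symm hev)
      rwa [leftLim_eq_of_tendsto htd]

section Main
variable (f : ℝ → ℝ)

lemma cad_all (hrc : ∀ t ≥ (0:ℝ), ContinuousWithinAt f (Set.Ici t) t)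
    (hll : ∀ t > (0:ℝ), Tendsto f (𝓝[<] t) (𝓝 (leftLim f t))) (n : ℕ) :
    (∀ t ≥ (0:ℝ), ContinuousWithinAt (resSeq f n) (Set.Ici t) t) ∧
    (∀ t > (0:ℝ), Tendsto (resSeq f n) (𝓝[<] t) (𝓝 (leftLim (resSeq f n) t))) := by
  induction n with
  | zero => exact ⟨hrc, hll⟩
  | succ n ih => rw [resSeq_succ]; exact cadlag_resStep ih.1 ih.2

lemma tau_mono : Monotone (tauSeq f) := by
  apply monotone_nat_of_le_succ
  intro n
  rw [tauSeq, tauSeq, resSeq_succ]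
  exact tauP_le_resStep _

lemma chain {u : ℝ} {a b : ℕ} (hab : a ≤ b) (h : ENNReal.ofReal u < tauSeq f a) :
    resSeq f b u = resSeq f a u := by
  induction b, hab using Nat.le_induction with
  | base => rfl
  | succ b hab ih =>
    rw [resSeq_succ, resStep_agree (lt_of_lt_of_le h (tau_mono f hab))]
    exact ih

lemma leftLim_nonneg_at_tau (hrc : ∀ t ≥ (0:ℝ), ContinuousWithinAt f (Set.Ici t) t)
    (hll : ∀ t > (0:ℝ), Tendsto f (𝓝[<] t) (𝓝 (leftLim f t))) (n : ℕ)
    (hpos : 0 < tauSeq f n) (hne : tauSeq f n ≠ ∞) :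
    0 ≤ leftLim (resSeq f n) (tauSeq f n).toReal := by
  have htpos : 0 < (tauSeq f n).toReal := ENNReal.toReal_pos hpos.ne' hne
  refine ge_of_tendsto ((cad_all f hrc hll n).2 _ htpos) ?_
  filter_upwards [Ioo_mem_nhdsLT_of_mem ⟨htpos, le_refl _⟩] with s hs
  exact (pos_of_lt_tauP hs.1.le (ofReal_lt_of_lt_toReal hpos hs.2)).le

lemma claim2 (hzeta : zetaP f = ∞) : ∀ t : ℝ, 0 ≤ t → resProc f t ≠ 0 := by
  intro t ht
  have hex : ∃ n, ENNReal.ofReal t < tauSeq f n := by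
    rw [← lt_iSup_iff, ← zetaP, hzeta]
    exact ENNReal.ofReal_lt_top
  rw [resProc, dif_pos hex]
  exact (pos_of_lt_tauP ht (Nat.find_spec hex)).ne'

end Main

section C1
variable (f : ℝ → ℝ)
  (hrc : ∀ t ≥ (0:ℝ), ContinuousWithinAt f (Set.Ici t) t)
  (hll : ∀ t > (0:ℝ), Tendsto f (𝓝[<] t) (𝓝 (leftLim f t)))

include hrc hll

/-- Case A : immediate absorption. -/
lemma claim1_zero (h0 : tauSeq f 0 = 0) :
    Tendsto (fun t => resProc f t) (𝓝[<] (zetaP f).toReal) (𝓝 0) := by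
  have h0' : tauP f = 0 := h0
  have hall : ∀ n, resSeq f n = f := by
    intro n
    induction n with
    | zero => rfl
    | succ n ih => rw [resSeq_succ, ih, resStep_of_tauP_eq_zero h0']
  have hτ0 : ∀ n, tauSeq f n = 0 := fun n => by rw [tauSeq, hall n]; exact h0'
  have hz : zetaP f = 0 := by rw [zetaP]; simp [hτ0]
  rw [hz, ENNReal.toReal_zero]
  have hev : ∀ᶠ u in 𝓝[<] (0:ℝ), resProc f u = 0 := by
    filter_upwards [self_mem_nhdsWithin] with u _
    rw [resProc, dif_neg]
    push_neg
    intro n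
    rw [hτ0 n]
    exact zero_le
  have hev' : (fun _ : ℝ => (0:ℝ)) =ᶠ[𝓝[<] (0:ℝ)] fun u => resProc f u := by
    filter_upwards [hev] with u hu using hu.symm
  exact Tendsto.congr' hev' tendsto_const_nhds

/-- Case B-stall. -/
lemma claim1_stall (hτfin : ∀ n, tauSeq f n ≠ ∞) (hpos : ∀ n, 0 < tauSeq f n)
    (N : ℕ) (hN : tauSeq f (N+1) = tauSeq f N) :
    Tendsto (fun t => resProc f t) (𝓝[<] (zetaP f).toReal) (𝓝 0) := by
  set τ := tauSeq f N with hτ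
  set w := τ.toReal with hw
  have hτne : τ ≠ ∞ := hτfin N
  have hτpos : 0 < τ := hpos N
  have hwpos : 0 < w := ENNReal.toReal_pos hτpos.ne' hτne
  have hOfw : ENNReal.ofReal w = τ := ENNReal.ofReal_toReal hτne
  have hval : resSeq f (N+1) w = leftLim (resSeq f N) w := by
    rw [resSeq_succ, resStep_shift hτne (by
      rw [show tauP (resSeq f N) = τ from rfl, hOfw]
      exact lt_irrefl τ)]
    rw [show tauP (resSeq f N) = τ from rfl, preVal, if_neg hτpos.ne']
    rw [← hw]
    ring_nf
  have hle0 : resSeq f (N+1) w ≤ 0 := by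
    have h1 : tauP (resSeq f (N+1)) = τ := hN
    have := attain (cad_all f hrc hll (N+1)).1 (by rw [h1]; exact hτne)
    rwa [h1] at this
  have hL0 : leftLim (resSeq f N) w = 0 :=
    le_antisymm (hval ▸ hle0) (leftLim_nonneg_at_tau f hrc hll N hτpos hτne)
  have haga : ∀ u : ℝ, u < w → resSeq f (N+1) u = resSeq f N u := fun u hu => by
    rw [resSeq_succ]
    exact resStep_agree (ofReal_lt_of_lt_toReal hτpos hu)
  have htd : Tendsto (resSeq f N) (𝓝[<] w) (𝓝 0) := hL0 ▸ (cad_all f hrc hll N).2 w hwpos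
  have htd1 : Tendsto (resSeq f (N+1)) (𝓝[<] w) (𝓝 0) := by
    refine htd.congr' ?_
    filter_upwards [self_mem_nhdsWithin] with u hu
    exact (haga u hu).symm
  have hleft1 : leftLim (resSeq f (N+1)) w = 0 :=
    leftLim_eq_of_tendsto htd1
  have hv0 : resSeq f (N+1) w = 0 := hval.trans hL0
  have hstable : ∀ k, resSeq f (N+1+k) = resSeq f (N+1) := by
    intro k
    induction k with
    | zero => rfl
    | succ k ih =>
      have : N+1+(k+1) = (N+1+k)+1 := rfl
      rw [this, resSeq_succ, ih]
      funext u
      have h1 : tauP (resSeq f (N+1)) = τ := hN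
      by_cases hu : ENNReal.ofReal u < tauP (resSeq f (N+1))
      · exact resStep_agree hu
      · rw [resStep_shift (by rw [h1]; exact hτne) hu, h1, preVal, if_neg hτpos.ne', ← hw,
          hv0, hleft1]
        ring
  have hτconst : ∀ n, tauSeq f n ≤ τ := by
    intro n
    rcases le_or_gt n N with h | h
    · exact tau_mono f h
    · obtain ⟨k, hk⟩ : ∃ k, n = N+1+k := ⟨n - (N+1), by omega⟩
      rw [hk, tauSeq, hstable k]
      exact le_of_eq hN
  have hzeq : zetaP f = τ := le_antisymm (iSup_le hτconst) (le_iSup (tauSeq f) N)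
  rw [hzeq, ← hw]
  have hev : ∀ᶠ u in 𝓝[<] w, resProc f u = resSeq f (N+1) u := by
    filter_upwards [self_mem_nhdsWithin] with u hu
    have hlt : ENNReal.ofReal u < tauSeq f N := ofReal_lt_of_lt_toReal hτpos hu
    have hex : ∃ n, ENNReal.ofReal u < tauSeq f n := ⟨N, hlt⟩
    rw [resProc, dif_pos hex]
    have hfind : Nat.find hex ≤ N := Nat.find_min' hex hlt
    exact (chain f (hfind.trans (Nat.le_succ N)) (Nat.find_spec hex)).symm
  have hev' : resSeq f (N+1) =ᶠ[𝓝[<] w] fun u => resProc f u := by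
    filter_upwards [hev] with u hu using hu.symm
  exact Tendsto.congr' hev' htd1

/-- Case B-strict. -/
lemma claim1_strict (hzeta : zetaP f < ∞) (hτfin : ∀ n, tauSeq f n ≠ ∞)
    (hpos : ∀ n, 0 < tauSeq f n) (hstrict : ∀ n, tauSeq f n < tauSeq f (n+1)) :
    Tendsto (fun t => resProc f t) (𝓝[<] (zetaP f).toReal) (𝓝 0) := by
  set t : ℕ → ℝ := fun n => (tauSeq f n).toReal with htdef
  have htmono : ∀ n, t n < t (n+1) := fun n =>
    (ENNReal.toReal_lt_toReal (hτfin n) (hτfin (n+1))).2 (hstrict n)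
  have htmono' : Monotone t := monotone_nat_of_le_succ fun n => (htmono n).le
  have ht0 : 0 < t 0 := ENNReal.toReal_pos (hpos 0).ne' (hτfin 0)
  have htpos : ∀ n, 0 < t n := fun n => lt_of_lt_of_le ht0 (htmono' (Nat.zero_le n))
  set z := (zetaP f).toReal with hz
  have hzne : zetaP f ≠ ∞ := hzeta.ne
  have htz : ∀ n, t n < z := fun n =>
    (ENNReal.toReal_lt_toReal (hτfin n) hzne).2
      (lt_of_lt_of_le (hstrict n) (le_iSup (tauSeq f) (n+1)))
  have htlim : Tendsto t atTop (𝓝 z) := by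
    have h1 : Tendsto (tauSeq f) atTop (𝓝 (zetaP f)) := by
      rw [zetaP]
      exact tendsto_atTop_iSup (tau_mono f)
    exact (ENNReal.tendsto_toReal hzne).comp h1
  have hzpos : 0 < z := lt_trans ht0 (htz 0)
  set L := leftLim f z with hL
  have hfl : Tendsto f (𝓝[<] z) (𝓝 L) := hll z hzpos
  set j : ℕ → ℝ := fun n => leftLim (resSeq f n) (t n) - resSeq f n (t n) with hj
  set S : ℕ → ℝ := fun n => ∑ k ∈ Finset.range n, j k with hS
  have hofr : ∀ n, ENNReal.ofReal (t n) = tauSeq f n := fun n => ENNReal.ofReal_toReal (hτfin n)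
  have hshift : ∀ n (u : ℝ), t n ≤ u → resSeq f (n+1) u = resSeq f n u + j n := by
    intro n u hu
    rw [resSeq_succ, resStep_shift (hτfin n) (by
      rw [not_lt, show tauP (resSeq f n) = tauSeq f n from rfl, ← hofr n]
      exact ENNReal.ofReal_le_ofReal hu)]
    rw [show tauP (resSeq f n) = tauSeq f n from rfl, preVal, if_neg (hpos n).ne']
    show resSeq f n u - (resSeq f n (t n) - leftLim (resSeq f n) (t n)) = _
    rw [hj]
    ring
  have hD : ∀ n (u : ℝ), t n ≤ u → resSeq f (n+1) u = f u + S (n+1) := by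
    intro n
    induction n with
    | zero =>
      intro u hu
      rw [hshift 0 u hu]
      show f u + j 0 = f u + S 1
      rw [hS]
      simp [Finset.sum_range_one]
    | succ n ih =>
      intro u hu
      rw [hshift (n+1) u hu, ih u ((htmono n).le.trans hu)]
      simp only [hS, Finset.sum_range_succ]
      ring
  have hattain : ∀ n, resSeq f n (t n) ≤ 0 := fun n => attain (cad_all f hrc hll n).1 (hτfin n)
  have hub : ∀ n, f (t (n+1)) ≤ -(S (n+1)) := by
    intro n
    have h1 := hattain (n+1)
    rw [hD n (t (n+1)) (htmono n).le] at h1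
    linarith
  have hlb : ∀ n, -(S (n+1)) ≤ leftLim f (t (n+1)) := by
    intro n
    have hnn := leftLim_nonneg_at_tau f hrc hll (n+1) (hpos (n+1)) (hτfin (n+1))
    have hev : (fun u => f u + S (n+1)) =ᶠ[𝓝[<] (t (n+1))] resSeq f (n+1) := by
      filter_upwards [Ioo_mem_nhdsLT_of_mem ⟨htmono n, le_refl _⟩] with u hu
      exact (hD n u hu.1.le).symm
    have htd : Tendsto (resSeq f (n+1)) (𝓝[<] (t (n+1))) (𝓝 (leftLim f (t (n+1)) + S (n+1))) :=
      Tendsto.congr' hev ((hll _ (htpos (n+1))).add tendsto_const_nhds)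
    have heq := leftLim_eq_of_tendsto htd
    rw [heq] at hnn
    linarith
  have hStend : Tendsto (fun n => S (n+1)) atTop (𝓝 (-L)) := by
    rw [Metric.tendsto_atTop]
    intro ε hε
    have hε3 : 0 < ε/3 := by linarith
    obtain ⟨δ, hδ, hδf⟩ := Metric.tendsto_nhdsWithin_nhds.1 hfl (ε/3) hε3
    obtain ⟨N1, hN1⟩ := Metric.tendsto_atTop.1 htlim δ hδ
    refine ⟨N1, fun n hn => ?_⟩
    have hd1 : dist (t (n+1)) z < δ := hN1 (n+1) (hn.trans (Nat.le_succ n))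
    have hfub : dist (f (t (n+1))) L < ε/3 := hδf (htz (n+1)) hd1
    have habs1 := abs_lt.1 (by rw [Real.dist_eq] at hfub; exact hfub)
    have h1 : L - ε/3 < -(S (n+1)) := by
      have := hub n
      linarith
    have hflt : Tendsto f (𝓝[<] (t (n+1))) (𝓝 (leftLim f (t (n+1)))) := hll _ (htpos (n+1))
    have hev2 : ∀ᶠ s in 𝓝[<] (t (n+1)), dist (f s) (leftLim f (t (n+1))) < ε/3 :=
      hflt (Metric.ball_mem_nhds _ hε3)
    have hev1 : ∀ᶠ s in 𝓝[<] (t (n+1)), s ∈ Set.Ioo (t n) (t (n+1)) :=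
      eventually_mem_set.2 (Ioo_mem_nhdsLT_of_mem ⟨htmono n, le_refl _⟩)
    obtain ⟨s, hs1, hs2⟩ := (hev1.and hev2).exists
    have hd0 : dist (t n) z < δ := hN1 n hn
    have habs0 := abs_lt.1 (by rw [Real.dist_eq] at hd0; exact hd0)
    have hsz : s < z := lt_trans hs1.2 (htz (n+1))
    have hsd : dist s z < δ := by
      rw [Real.dist_eq, abs_lt]
      constructor <;> [linarith [hs1.1]; linarith]
    have hfs : dist (f s) L < ε/3 := hδf hsz hsd
    have habs2 := abs_lt.1 (by rw [Real.dist_eq] at hs2; exact hs2)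
    have habs3 := abs_lt.1 (by rw [Real.dist_eq] at hfs; exact hfs)
    have h2 : -(S (n+1)) < L + 2*(ε/3) := by
      have := hlb n
      linarith
    rw [Real.dist_eq, abs_lt]
    constructor <;> linarith
  rw [show nhdsWithin (zetaP f).toReal (Set.Iio (zetaP f).toReal) = 𝓝[<] z from rfl]
  rw [Metric.tendsto_nhdsWithin_nhds]
  intro ε hε
  obtain ⟨δ1, hδ1, hδf⟩ := Metric.tendsto_nhdsWithin_nhds.1 hfl (ε/2) (by linarith)
  obtain ⟨N, hN⟩ := Metric.tendsto_atTop.1 hStend (ε/2) (by linarith)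
  refine ⟨min δ1 (z - t N), lt_min hδ1 (sub_pos.2 (htz N)), fun {u} hu hud => ?_⟩
  have hu1 : dist u z < δ1 := lt_of_lt_of_le hud (min_le_left _ _)
  have hud2 : dist u z < z - t N := lt_of_lt_of_le hud (min_le_right _ _)
  have huz : u < z := hu
  have huN : t N < u := by
    rw [Real.dist_eq] at hud2
    have := abs_lt.1 hud2
    linarith
  have hu0 : 0 ≤ u := ((htpos N).trans huN).le
  have hzp : 0 < zetaP f := lt_of_lt_of_le (hpos 0) (le_iSup (tauSeq f) 0)
  have hex : ∃ n, ENNReal.ofReal u < tauSeq f n := by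
    have h1 : ENNReal.ofReal u < zetaP f := ofReal_lt_of_lt_toReal hzp huz
    rw [zetaP] at h1
    exact lt_iSup_iff.1 h1
  have hspec : ENNReal.ofReal u < tauSeq f (Nat.find hex) := Nat.find_spec hex
  have hmN : N + 1 ≤ Nat.find hex := by
    by_contra h
    push_neg at h
    have h2 : ENNReal.ofReal u < tauSeq f N :=
      lt_of_lt_of_le hspec (tau_mono f (Nat.lt_succ_iff.1 h))
    have : u < t N := (ofReal_lt_iff (hpos N) (hτfin N) u).1 h2
    linarith
  obtain ⟨k, hk⟩ : ∃ k, Nat.find hex = k + 1 := ⟨Nat.find hex - 1, by omega⟩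
  have hklt : ¬ ENNReal.ofReal u < tauSeq f k := Nat.find_min hex (by omega)
  have htk : t k ≤ u := toReal_le_of_not_lt hu0 hklt
  have hZu : resProc f u = f u + S (k+1) := by
    rw [resProc, dif_pos hex, hk]
    exact hD k u htk
  have hd1 : dist (f u) L < ε/2 := hδf hu hu1
  have hd2 : dist (S (k+1)) (-L) < ε/2 := hN k (by omega)
  have habs1 := abs_lt.1 (by rw [Real.dist_eq] at hd1; exact hd1)
  have habs2 := abs_lt.1 (by rw [Real.dist_eq] at hd2; exact hd2)
  rw [hZu, Real.dist_eq, abs_lt]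
  constructor <;> linarith

end C1

section Final
variable (f : ℝ → ℝ)
  (hrc : ∀ t ≥ (0:ℝ), ContinuousWithinAt f (Set.Ici t) t)
  (hll : ∀ t > (0:ℝ), Tendsto f (𝓝[<] t) (𝓝 (leftLim f t)))

include hrc hll

lemma claim1 (hzeta : zetaP f < ∞) :
    Tendsto (fun t => resProc f t) (𝓝[<] (zetaP f).toReal) (𝓝 0) := by
  have hτfin : ∀ n, tauSeq f n ≠ ∞ := fun n =>
    (lt_of_le_of_lt (le_iSup (tauSeq f) n) hzeta).ne
  rcases eq_or_ne (tauSeq f 0) 0 with h0 | h0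
  · exact claim1_zero f hrc hll h0
  · have hpos : ∀ n, 0 < tauSeq f n := fun n =>
      lt_of_lt_of_le (pos_iff_ne_zero.2 h0) (tau_mono f (Nat.zero_le n))
    by_cases hstall : ∃ N, tauSeq f (N+1) = tauSeq f N
    · obtain ⟨N, hN⟩ := hstall
      exact claim1_stall f hrc hll hτfin hpos N hN
    · push_neg at hstall
      exact claim1_strict f hrc hll hzeta hτfin hpos fun n =>
        lt_of_le_of_ne (tau_mono f (Nat.le_succ n)) (Ne.symm (hstall n))

end Final
end Res14


/-- On the event `{ζ < ∞}`, the resurrected process reaches `0` continuously: `Z_{ζ-} = 0`;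
in particular, either `Z` reaches `0` continuously at a finite time or it never reaches `0`. -/
theorem statement14 {Ω : Type*} [MeasurableSpace Ω] (P : Measure Ω) [IsProbabilityMeasure P]
    (X : ℝ → Ω → ℝ) (hX : IsLevy P X) :
    ∀ x : ℝ, 0 ≤ x → ∀ᵐ ω ∂P,
      (zetaP (pathFrom X x ω) < ∞ →
        Tendsto (fun t => resProc (pathFrom X x ω) t)
          (nhdsWithin (zetaP (pathFrom X x ω)).toReal
            (Set.Iio (zetaP (pathFrom X x ω)).toReal))
          (nhds 0))
      ∧ (zetaP (pathFrom X x ω) = ∞ → ∀ t : ℝ, 0 ≤ t → resProc (pathFrom X x ω) t ≠ 0) := by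
  intro x hx
  refine Filter.Eventually.of_forall fun ω => ?_
  set f : ℝ → ℝ := pathFrom X x ω with hf
  have hrc : ∀ t ≥ (0:ℝ), ContinuousWithinAt f (Set.Ici t) t := fun t ht =>
    continuousWithinAt_const.add (hX.cadlag_right ω t ht)
  have hll : ∀ t > (0:ℝ), Filter.Tendsto f (nhdsWithin t (Set.Iio t))
      (nhds (Function.leftLim f t)) := by
    intro t ht
    have h1 := hX.cadlag_left ω t ht
    have h2 : Filter.Tendsto f (nhdsWithin t (Set.Iio t))
        (nhds (x + Function.leftLim (fun s => X s ω) t)) := tendsto_const_nhds.add h1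
    rwa [leftLim_eq_of_tendsto h2]
  exact ⟨Res14.claim1 f hrc hll, Res14.claim2 f⟩
end
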